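/- Let H be a nonzero additive subgroup of ℚ and let K be a nonzero torsion-free abelian group of finite rank. Let G = H × K, ordered by the positive cone G⁺ = {(h,k) : h > 0} ∪ {(0,0)}. Suppose there exist a maximal ℤ-linearly independent family k₁′, …, k_n′ of elements of K and an element h′ ∈ H with h′ > 0 such that for every prime p and all integers c₁, …, c_n with p not dividing gcd(c₁,…,c_n): if c₁k₁′ + ⋯ + c_nk_n′ ∈ p·K, then h′ ∉ p·H. Then G is not ultrasimplicial; more precisely, there is no finite ℤ-linearly independent subset S of G⁺ such that each of the 2n+1 elements (h′,0), (h′,k₁′), …, (h′,k_n′), (h′,−k₁′), …, (h′,−k_n′) of G⁺ can be written as a sum of elements of S with nonnegative integer coefficients. -/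

import Mathlib

theorem bezout_finset {ι : Type*} (s : Finset ι) (f : ι → ℤ) :
    ∃ c : ι → ℤ, s.gcd f = ∑ i ∈ s, c i * f i := by
  classical
  induction s using Finset.induction_on with
  | empty => exact ⟨0, by simp⟩
  | insert b s hbs ih =>
    obtain ⟨c, hc⟩ := ih
    refine ⟨Function.update (fun i => (f b).gcdB (s.gcd f) * c i) b ((f b).gcdA (s.gcd f)), ?_⟩
    rw [Finset.gcd_insert, Finset.sum_insert hbs, Function.update_self]
    have h4 : ∑ i ∈ s, Function.update (fun i => (f b).gcdB (s.gcd f) * c i) b ((f b).gcdA (s.gcd f)) i * f i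
        = ∑ i ∈ s, (f b).gcdB (s.gcd f) * (c i * f i) := by
      refine Finset.sum_congr rfl fun i hi => ?_
      rw [Function.update_of_ne (by rintro rfl; exact hbs hi), mul_assoc]
    rw [h4, ← Finset.mul_sum, ← hc]
    have h2 := Int.gcd_eq_gcd_ab (f b) (s.gcd f)
    have h3 : gcd (f b) (s.gcd f) = (Int.gcd (f b) (s.gcd f) : ℤ) := (Int.coe_gcd _ _).symm
    rw [h3, h2]; ring

theorem core_lemma {K : Type*} [AddCommGroup K] [NoZeroSMulDivisors ℤ K]
    (H : AddSubgroup ℚ)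
    {n : ℕ} (hn : 1 ≤ n) (k' : Fin n → K)
    (s : Fin (n+1) → H × K)
    (a : Fin n → Fin (n+1) → ℤ)
    (m : Fin (n+1) → ℤ) (hm : ∀ j, 1 ≤ m j)
    (hgcd : Finset.univ.gcd m = 1)
    (βH : H) (hsm : ∀ j, ((s j).1 : ℚ) = m j * (βH : ℚ))
    (hma : ∀ i, ∑ j, m j * a i j = 0)
    (ha : ∀ i, ∑ j, a i j • s j = ((0 : H), k' i)) :
    ∀ W : ℕ, ∀ c0 : Fin (n+1) → ℤ, (∀ j, 1 ≤ c0 j) →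
      ∀ h' : H,
      (∀ q : ℕ, q.Prime → ∀ c : Fin n → ℤ, ¬ ((q : ℤ) ∣ Finset.univ.gcd c) →
        (∃ b : K, ∑ i, c i • k' i = (q : ℤ) • b) → ¬ ∃ b : H, h' = q • b) →
      (∑ j, c0 j • s j = ((h' : H), (0 : K))) →
      (∑ j, c0 j * m j).toNat = W → False := by
  intro W
  induction W using Nat.strong_induction_on with
  | _ W IH =>
  intro c0 hc0pos h' hdiv hrel hW
  classical
  set w : ℤ := ∑ j, c0 j * m j with hw_def
  have hterm : ∀ j : Fin (n+1), (1:ℤ) ≤ c0 j * m j := fun j =>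
    one_le_mul_of_one_le_of_one_le (hc0pos j) (hm j)
  have hw2 : 2 ≤ w := by
    have h1 : ((Finset.univ : Finset (Fin (n+1))).card : ℤ) ≤ w := by
      rw [hw_def]
      calc ((Finset.univ : Finset (Fin (n+1))).card : ℤ)
          = ∑ _j : Fin (n+1), (1:ℤ) := by simp
        _ ≤ ∑ j, c0 j * m j := Finset.sum_le_sum fun j _ => hterm j
    simp only [Finset.card_univ, Fintype.card_fin] at h1
    have : (2:ℤ) ≤ (n+1 : ℕ) := by exact_mod_cast Nat.succ_le_succ hn
    linarith
  -- coercion of first component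
  have hcoeH : ∀ (f : Fin (n+1) → H), ((∑ j, f j : H) : ℚ) = ∑ j, (f j : ℚ) := by
    intro f
    exact map_sum H.subtype f Finset.univ
  have hfst : ∀ (g : Fin (n+1) → ℤ), (∑ j, g j • s j).1 = ∑ j, g j • (s j).1 := by
    intro g
    rw [Prod.fst_sum]
    exact Finset.sum_congr rfl fun j _ => Prod.smul_fst _ _
  have hh'w : (h' : ℚ) = w * (βH : ℚ) := by
    have := congrArg (fun x : H × K => ((x.1 : ℚ))) hrel
    simp only [hfst] at this
    rw [hcoeH] at this
    rw [← this, hw_def]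
    push_cast
    rw [Finset.sum_mul]
    refine Finset.sum_congr rfl fun j _ => ?_
    rw [hsm j, zsmul_eq_mul]; push_cast; ring
  -- prime q dividing w
  have hwna : w.natAbs ≠ 1 := by omega
  obtain ⟨p, hpp, hpw⟩ := Int.exists_prime_and_dvd hwna
  set q : ℕ := p.natAbs with hq_def
  have hq : q.Prime := Int.prime_iff_natAbs_prime.mp hpp
  have hqw : (q : ℤ) ∣ w := Int.natAbs_dvd.mpr hpw
  haveI : Fact q.Prime := ⟨hq⟩
  -- the matrix
  set A : Matrix (Fin (n+1)) (Fin (n+1)) ℤ :=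
    Matrix.of (fun j col => Fin.cases (c0 j) (fun i => a i j) col) with hA_def
  have hA0 : ∀ j, A j 0 = c0 j := fun j => rfl
  have hAs : ∀ j i, A j (Fin.succ i) = a i j := fun j i => rfl
  set Ab : Matrix (Fin (n+1)) (Fin (n+1)) (ZMod q) :=
    A.map (Int.cast : ℤ → ZMod q) with hAb_def
  have hleft : Matrix.vecMul (fun j => ((m j : ZMod q))) Ab = 0 := by
    funext col
    have hsum : ∑ j, m j * A j col = if col = 0 then w else 0 := by
      induction col using Fin.cases with
      | zero =>
        simp only [if_pos rfl, hw_def]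
        exact Finset.sum_congr rfl fun j _ => by rw [hA0, mul_comm]
      | succ i =>
        simp only [hAs]
        rw [if_neg (Fin.succ_ne_zero i)]
        exact hma i
    have : (Matrix.vecMul (fun j => ((m j : ZMod q))) Ab) col
        = ((∑ j, m j * A j col : ℤ) : ZMod q) := by
      rw [Matrix.vecMul, dotProduct]
      push_cast
      exact Finset.sum_congr rfl fun j _ => by rw [hAb_def]; simp [Matrix.map]
    rw [Pi.zero_apply, this, hsum]
    split
    · exact (ZMod.intCast_zmod_eq_zero_iff_dvd w q).mpr hqw
    · exact Int.cast_zero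
  have hmnz : (fun j => ((m j : ZMod q))) ≠ 0 := by
    intro h0
    have : ∀ j : Fin (n+1), (q:ℤ) ∣ m j := by
      intro j
      have := congrFun h0 j
      simpa using (ZMod.intCast_zmod_eq_zero_iff_dvd (m j) q).mp this
    have : (q:ℤ) ∣ Finset.univ.gcd m := Finset.dvd_gcd fun j _ => this j
    rw [hgcd] at this
    have := Int.le_of_dvd one_pos this
    have := hq.two_le
    omega
  have hdet : Ab.det = 0 := by
    rw [← Matrix.exists_vecMul_eq_zero_iff]
    exact ⟨_, hmnz, hleft⟩
  obtain ⟨v, hv0, hvA⟩ := (Matrix.exists_mulVec_eq_zero_iff).mpr hdet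
  set u : Fin (n+1) → ℤ := fun j => ((v j).val : ℤ) with hu_def
  have hu : ∀ j, ((u j : ZMod q)) = v j := by
    intro j
    rw [hu_def]
    push_cast
    exact ZMod.natCast_rightInverse (v j)
  have hqdvd : ∀ j, (q:ℤ) ∣ (A.mulVec u) j := by
    intro j
    rw [← ZMod.intCast_zmod_eq_zero_iff_dvd]
    have : (((A.mulVec u) j : ℤ) : ZMod q) = (Ab.mulVec v) j := by
      rw [Matrix.mulVec, Matrix.mulVec, dotProduct, dotProduct]
      push_cast
      refine Finset.sum_congr rfl fun col _ => ?_
      rw [hu, hAb_def]; simp [Matrix.map]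
    rw [this, hvA, Pi.zero_apply]
  set z : Fin (n+1) → ℤ := fun j => (A.mulVec u) j / q with hz_def
  have hz : ∀ j, (A.mulVec u) j = q * z j := fun j => (Int.mul_ediv_cancel' (hqdvd j)).symm
  have hY0 : ∑ j, A j 0 • s j = ((h' : H), (0:K)) := by
    simpa only [hA0] using hrel
  have hYs : ∀ i, ∑ j, A j (Fin.succ i) • s j = ((0:H), k' i) := by
    intro i
    simpa only [hAs] using ha i
  have key : (q:ℤ) • (∑ j, z j • s j)
      = u 0 • ((h' : H), (0:K)) + ∑ i, u i.succ • ((0:H), k' i) := by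
    rw [Finset.smul_sum]
    calc ∑ j, (q:ℤ) • z j • s j = ∑ j, (A.mulVec u j) • s j := by
          refine Finset.sum_congr rfl fun j _ => ?_
          rw [hz j, mul_smul]
      _ = ∑ j, ∑ col, (u col * A j col) • s j := by
          refine Finset.sum_congr rfl fun j _ => ?_
          rw [Matrix.mulVec, dotProduct, ← Finset.sum_smul]
          congr 1
          exact Finset.sum_congr rfl fun col _ => mul_comm _ _
      _ = ∑ col, ∑ j, (u col * A j col) • s j := Finset.sum_comm
      _ = ∑ col, u col • ∑ j, A j col • s j := by
          refine Finset.sum_congr rfl fun col _ => ?_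
          rw [Finset.smul_sum]
          exact Finset.sum_congr rfl fun j _ => mul_smul _ _ _
      _ = u 0 • ((h' : H), (0:K)) + ∑ i, u i.succ • ((0:H), k' i) := by
          rw [Fin.sum_univ_succ, hY0]
          congr 1
          exact Finset.sum_congr rfl fun i _ => by rw [hYs i]
  have h2 : ∑ i, u i.succ • k' i = (q:ℤ) • (∑ j, z j • s j).2 := by
    have h3 := congrArg Prod.snd key
    simp only [Prod.smul_snd, Prod.snd_add, Prod.snd_sum, Prod.smul_mk, smul_zero,
      zero_add] at h3
    rw [Prod.snd_sum]
    simp only [Prod.smul_snd] at h3 ⊢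
    exact h3.symm
  by_cases hall : ∀ i : Fin n, v i.succ = 0
  · -- descent case
    have hv00 : v 0 ≠ 0 := by
      intro h00
      apply hv0
      funext j
      induction j using Fin.cases with
      | zero => exact h00
      | succ i => exact hall i
    have hc0q : ∀ j, (q:ℤ) ∣ c0 j := by
      intro j
      have h0 : (Ab.mulVec v) j = 0 := by rw [hvA]; rfl
      rw [Matrix.mulVec, dotProduct, Fin.sum_univ_succ] at h0
      have hrest : ∀ i : Fin n, Ab j i.succ * v i.succ = 0 := by
        intro i; rw [hall i, mul_zero]
      rw [Finset.sum_eq_zero fun i _ => hrest i, add_zero] at h0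
      have : Ab j 0 = 0 := by
        rcases mul_eq_zero.mp h0 with h | h
        · exact h
        · exact absurd h hv00
      have : ((c0 j : ℤ) : ZMod q) = 0 := by
        rw [← hA0 j]
        simpa [hAb_def, Matrix.map] using this
      exact (ZMod.intCast_zmod_eq_zero_iff_dvd _ q).mp this
    set c1 : Fin (n+1) → ℤ := fun j => c0 j / q with hc1_def
    have hc1 : ∀ j, c0 j = q * c1 j := fun j => (Int.mul_ediv_cancel' (hc0q j)).symm
    have hc1pos : ∀ j, 1 ≤ c1 j := by
      intro j
      by_contra hle
      push_neg at hle
      have h1 : c1 j ≤ 0 := by omega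
      have h2' : (q:ℤ) * c1 j ≤ 0 :=
        mul_nonpos_of_nonneg_of_nonpos (by positivity) h1
      have := hc0pos j
      rw [hc1 j] at this
      omega
    set P : H × K := ∑ j, c1 j • s j with hP_def
    have hqP : (q:ℤ) • P = ((h' : H), (0:K)) := by
      rw [hP_def, Finset.smul_sum, ← hrel]
      refine Finset.sum_congr rfl fun j _ => ?_
      rw [← mul_smul, ← hc1 j]
    have hP2 : P.2 = 0 := by
      have := congrArg Prod.snd hqP
      simp only [Prod.smul_snd] at this
      have hq0 : (q:ℤ) ≠ 0 := by exact_mod_cast hq.ne_zero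
      rcases smul_eq_zero.mp this with h | h
      · exact absurd h hq0
      · exact h
    have hqh : (q:ℤ) • P.1 = h' := by
      have := congrArg Prod.fst hqP
      simpa using this
    have hrel'' : ∑ j, c1 j • s j = ((P.1 : H), (0:K)) := by
      rw [← hP_def, ← hP2]
    have hdiv'' : ∀ p' : ℕ, p'.Prime → ∀ c : Fin n → ℤ, ¬ ((p' : ℤ) ∣ Finset.univ.gcd c) →
        (∃ b : K, ∑ i, c i • k' i = (p' : ℤ) • b) → ¬ ∃ b : H, P.1 = p' • b := by
      intro p' hp' c hc hk hex
      obtain ⟨b, hb⟩ := hex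
      refine hdiv p' hp' c hc hk ⟨q • b, ?_⟩
      rw [← hqh, hb]
      rw [smul_comm]
      norm_cast
    have hw' : (q:ℤ) * (∑ j, c1 j * m j) = w := by
      rw [hw_def, Finset.mul_sum]
      refine Finset.sum_congr rfl fun j _ => by rw [← mul_assoc, ← hc1 j]
    have hw'pos : 0 < ∑ j, c1 j * m j := by
      have : (0:ℤ) < ∑ j : Fin (n+1), (1:ℤ) := by
        simp [Finset.card_univ]
      calc (0:ℤ) < ∑ _j : Fin (n+1), (1:ℤ) := this
        _ ≤ ∑ j, c1 j * m j :=
          Finset.sum_le_sum fun j _ => one_le_mul_of_one_le_of_one_le (hc1pos j) (hm j)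
    have hlt : (∑ j, c1 j * m j).toNat < W := by
      rw [← hW]
      have hq2 : (2:ℤ) ≤ q := by exact_mod_cast hq.two_le
      have : (∑ j, c1 j * m j) < w := by nlinarith
      rw [Int.toNat_lt_toNat]
      · exact this
      · omega
    exact IH _ hlt c1 hc1pos P.1 hdiv'' hrel'' rfl
  · -- contradiction case
    push_neg at hall
    obtain ⟨i0, hi0⟩ := hall
    set c : Fin n → ℤ := fun i => u i.succ with hc_def
    have hcg : ¬ ((q:ℤ) ∣ Finset.univ.gcd c) := by
      intro hd
      apply hi0
      have : (q:ℤ) ∣ c i0 := hd.trans (Finset.gcd_dvd (Finset.mem_univ i0))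
      have := (ZMod.intCast_zmod_eq_zero_iff_dvd _ q).mpr this
      rw [hc_def] at this
      rw [← hu i0.succ]
      exact this
    have hkdiv : ∃ b : K, ∑ i, c i • k' i = (q:ℤ) • b := ⟨(∑ j, z j • s j).2, h2⟩
    refine hdiv q hq c hcg hkdiv ⟨(w / q) • βH, ?_⟩
    have hwq : w = q * (w / q) := (Int.mul_ediv_cancel' hqw).symm
    refine Subtype.ext ?_
    have hcast : ((q • ((w / (q:ℤ)) • βH) : H) : ℚ)
        = (q:ℚ) * (((w / (q:ℤ) : ℤ)):ℚ) * (βH:ℚ) := by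
      push_cast
      rw [zsmul_eq_mul]
      ring
    rw [hcast, hh'w]
    have h5 : ((w:ℚ)) = (q:ℚ) * ((w / (q:ℤ) : ℤ) : ℚ) := by exact_mod_cast hwq
    rw [h5]

section Main

variable {K : Type*} [AddCommGroup K] [NoZeroSMulDivisors ℤ K]

set_option maxHeartbeats 1000000 in
theorem statement1_aux
    (H : AddSubgroup ℚ)
    (n : ℕ) (k' : Fin n → K)
    (hind : LinearIndependent ℤ k')
    (hmax : ∀ k : K, ∃ c : ℤ, c ≠ 0 ∧ c • k ∈ Submodule.span ℤ (Set.range k'))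
    (hn : 1 ≤ n)
    (h' : H) (hh' : 0 < (h' : ℚ))
    (hdiv : ∀ q : ℕ, q.Prime → ∀ c : Fin n → ℤ, ¬ ((q : ℤ) ∣ Finset.univ.gcd c) →
      (∃ b : K, ∑ i, c i • k' i = (q : ℤ) • b) → ¬ ∃ b : H, h' = q • b) :
    ¬ ∃ S : Finset (H × K),
        ↑S ⊆ ({g : H × K | 0 < (g.1 : ℚ)} ∪ {0} : Set (H × K)) ∧
        LinearIndependent ℤ (fun s : (S : Set (H × K)) => (s : H × K)) ∧
        ∀ f ∈ ({((h' : H), (0 : K))} ∪ (Set.range fun i : Fin n => ((h' : H), k' i)) ∪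
            (Set.range fun i : Fin n => ((h' : H), -(k' i))) : Set (H × K)),
          ∃ c : H × K → ℕ, f = ∑ s ∈ S, c s • s := by
  classical
  rintro ⟨S, hScone, hSind, hSrep⟩
  -- ### the θ map to ℚ^n
  have hmax' : ∀ k : K, ∃ c : ℤ, ∃ d : Fin n → ℤ, c ≠ 0 ∧ ∑ i, d i • k' i = c • k := by
    intro k
    obtain ⟨c, hc, hmem⟩ := hmax k
    rw [Submodule.mem_span_range_iff_exists_fun] at hmem
    obtain ⟨d, hd⟩ := hmem
    exact ⟨c, d, hc, hd⟩
  choose cc dd hcc hdd using hmax'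
  have hindq : ∀ g : Fin n → ℤ, ∑ i, g i • k' i = 0 → ∀ i, g i = 0 :=
    Fintype.linearIndependent_iff.mp hind
  set θ : K → (Fin n → ℚ) := fun k => ((cc k : ℚ))⁻¹ • fun i => ((dd k i : ℚ)) with hθ_def
  have θeq : ∀ (k : K) (c : ℤ) (d : Fin n → ℤ), c ≠ 0 → ∑ i, d i • k' i = c • k →
      θ k = ((c:ℚ))⁻¹ • fun i => ((d i : ℚ)) := by
    intro k c d hc hd
    have h1 : ∑ i, (c * dd k i) • k' i = ∑ i, (cc k * d i) • k' i := by
      calc ∑ i, (c * dd k i) • k' i = c • ∑ i, dd k i • k' i := by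
            rw [Finset.smul_sum]
            exact Finset.sum_congr rfl fun i _ => mul_smul _ _ _
        _ = c • (cc k • k) := by rw [hdd k]
        _ = cc k • (c • k) := smul_comm _ _ _
        _ = cc k • ∑ i, d i • k' i := by rw [hd]
        _ = ∑ i, (cc k * d i) • k' i := by
            rw [Finset.smul_sum]
            exact Finset.sum_congr rfl fun i _ => (mul_smul _ _ _).symm
    have h2 : ∀ i, c * dd k i = cc k * d i := by
      intro i
      have h3 : ∑ i, (c * dd k i - cc k * d i) • k' i = 0 := by
        simp only [sub_smul]
        rw [Finset.sum_sub_distrib, h1, sub_self]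
      have := hindq _ h3 i
      omega
    have hccq : ((cc k : ℚ)) ≠ 0 := Int.cast_ne_zero.mpr (hcc k)
    have hcq : ((c:ℚ)) ≠ 0 := Int.cast_ne_zero.mpr hc
    funext i
    simp only [hθ_def, Pi.smul_apply, smul_eq_mul]
    rw [inv_mul_eq_div, inv_mul_eq_div, div_eq_div_iff hccq hcq]
    have h4 := h2 i
    have h5 : ((c : ℚ)) * dd k i = (cc k : ℚ) * d i := by exact_mod_cast congrArg (Int.cast : ℤ → ℚ) h4
    linarith [h5]
  have θself : ∀ k : K, θ k = ((cc k : ℚ))⁻¹ • fun i => ((dd k i : ℚ)) := fun k => rfl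
  have θ0 : θ 0 = 0 := by
    have := θeq 0 1 0 one_ne_zero (by simp)
    exact this.trans (by funext i; simp)
  have θk' : ∀ i, θ (k' i) = Pi.single i (1:ℚ) := by
    intro i
    have hrel : ∑ j, (if j = i then (1:ℤ) else 0) • k' j = (1:ℤ) • k' i := by
      have hterm : ∀ j, (if j = i then (1:ℤ) else 0) • k' j = if j = i then k' j else 0 := by
        intro j; split <;> simp
      rw [Finset.sum_congr rfl fun j _ => hterm j, Finset.sum_ite_eq' Finset.univ i k']
      simp
    have := θeq (k' i) 1 (fun j => if j = i then (1:ℤ) else 0) one_ne_zero hrel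
    rw [this]
    funext j
    simp [Pi.single_apply, apply_ite (fun z : ℤ => (z : ℚ))]
  have θadd : ∀ x y : K, θ (x + y) = θ x + θ y := by
    intro x y
    have hrel : ∑ i, (cc y * dd x i + cc x * dd y i) • k' i = (cc x * cc y) • (x + y) := by
      simp only [add_smul]
      rw [Finset.sum_add_distrib]
      have e1 : ∑ i, (cc y * dd x i) • k' i = cc y • (cc x • x) := by
        rw [← hdd x, Finset.smul_sum]
        exact Finset.sum_congr rfl fun i _ => mul_smul _ _ _
      have e2 : ∑ i, (cc x * dd y i) • k' i = cc x • (cc y • y) := by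
        rw [← hdd y, Finset.smul_sum]
        exact Finset.sum_congr rfl fun i _ => mul_smul _ _ _
      rw [e1, e2]
      rw [smul_add]
      congr 1
      · rw [smul_smul, mul_comm]
      · rw [smul_smul]
    have h1 := θeq (x + y) (cc x * cc y) _ (mul_ne_zero (hcc x) (hcc y)) hrel
    rw [h1, θself x, θself y]
    funext i
    have hx0 : ((cc x : ℚ)) ≠ 0 := Int.cast_ne_zero.mpr (hcc x)
    have hy0 : ((cc y : ℚ)) ≠ 0 := Int.cast_ne_zero.mpr (hcc y)
    simp only [Pi.smul_apply, Pi.add_apply, smul_eq_mul]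
    push_cast
    field_simp
  have θzsmul : ∀ (t : ℤ) (x : K), θ (t • x) = (t:ℚ) • θ x := by
    intro t x
    have hrel : ∑ i, (t * dd x i) • k' i = cc x • (t • x) := by
      have : ∑ i, (t * dd x i) • k' i = t • ∑ i, dd x i • k' i := by
        rw [Finset.smul_sum]
        exact Finset.sum_congr rfl fun i _ => mul_smul _ _ _
      rw [this, hdd x, smul_comm]
    have h1 := θeq (t • x) (cc x) _ (hcc x) hrel
    rw [h1, θself x]
    funext i
    simp only [Pi.smul_apply, smul_eq_mul]
    push_cast
    ring
  have θinj : ∀ x : K, θ x = 0 → x = 0 := by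
    intro x hx
    have hd0 : ∀ i, dd x i = 0 := by
      intro i
      have := congrFun hx i
      simp only [hθ_def, Pi.smul_apply, smul_eq_mul, Pi.zero_apply] at this
      have hx0 : ((cc x : ℚ)) ≠ 0 := Int.cast_ne_zero.mpr (hcc x)
      rcases mul_eq_zero.mp this with h | h
      · exact absurd h (inv_ne_zero hx0)
      · exact_mod_cast h
    have : cc x • x = 0 := by
      rw [← hdd x]
      simp [hd0]
    rcases smul_eq_zero.mp this with h | h
    · exact absurd h (hcc x)
    · exact h
  -- ### the injective linear map ψ into ℚ × ℚ^n
  set ψf : H × K → ℚ × (Fin n → ℚ) := fun x => (((x.1 : ℚ)), θ x.2) with hψf_def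
  have ψadd : ∀ x y : H × K, ψf (x + y) = ψf x + ψf y := by
    intro x y
    simp only [hψf_def, Prod.fst_add, Prod.snd_add, Prod.mk_add_mk, Prod.mk.injEq]
    constructor
    · push_cast; ring
    · exact θadd _ _
  set ψ : H × K →ₗ[ℤ] ℚ × (Fin n → ℚ) := (AddMonoidHom.mk' ψf ψadd).toIntLinearMap with hψ_def
  have ψapp : ∀ x : H × K, ψ x = (((x.1 : ℚ)), θ x.2) := fun x => rfl
  have ψinj : Function.Injective ψ := by
    intro x y hxy
    have h1 : ((x.1 : ℚ)) = y.1 := congrArg Prod.fst hxy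
    have h2 : θ x.2 = θ y.2 := congrArg Prod.snd hxy
    have hsub : θ (x.2 - y.2) = 0 := by
      have : x.2 - y.2 = x.2 + (-1 : ℤ) • y.2 := by simp [sub_eq_add_neg]
      rw [this, θadd, θzsmul, h2]
      simp
    have h3 : x.2 = y.2 := by
      have := θinj _ hsub
      rwa [sub_eq_zero] at this
    have h4 : x.1 = y.1 := Subtype.ext h1
    exact Prod.ext h4 h3
  -- ### independence over ℚ and cardinality bound
  have hSindZ : LinearIndependent ℤ (fun x : (S : Set (H × K)) => ψ (x : H × K)) :=
    hSind.map' ψ (LinearMap.ker_eq_bot.mpr ψinj)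
  have hSindQ : LinearIndependent ℚ (fun x : (S : Set (H × K)) => ψ (x : H × K)) :=
    (LinearIndependent.iff_fractionRing ℤ ℚ).mp hSindZ
  have hfinrank : Module.finrank ℚ (ℚ × (Fin n → ℚ)) = n + 1 := by
    rw [Module.finrank_prod, Module.finrank_self, Module.finrank_fintype_fun_eq_card,
      Fintype.card_fin]
    omega
  have hcard_le : S.card ≤ n + 1 := by
    have h1 := hSindQ.fintype_card_le_finrank
    rw [hfinrank] at h1
    simpa using h1
  -- ### representations
  have hmem0 : (((h' : H), (0 : K)) : H × K) ∈
      (({((h' : H), (0 : K))} ∪ (Set.range fun i : Fin n => ((h' : H), k' i)) ∪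
        (Set.range fun i : Fin n => ((h' : H), -(k' i)))) : Set (H × K)) := by
    left; left; rfl
  obtain ⟨c0f, hc0f⟩ := hSrep _ hmem0
  choose cpf hcpf using fun i : Fin n =>
    hSrep ((h' : H), k' i) (by left; right; exact ⟨i, rfl⟩)
  choose cmf hcmf using fun i : Fin n =>
    hSrep ((h' : H), -(k' i)) (by right; exact ⟨i, rfl⟩)
  -- uniqueness of integer coefficients
  have uniq : ∀ f g : H × K → ℤ, ∑ x ∈ S, f x • x = ∑ x ∈ S, g x • x →
      ∀ x ∈ S, f x = g x := by
    intro f g hfg x hx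
    have h0 : ∑ y ∈ S, (f y - g y) • y = 0 := by
      simp only [sub_smul]
      rw [Finset.sum_sub_distrib, hfg, sub_self]
    have h1 : ∑ y : (S : Set (H × K)), (f (y : H × K) - g (y : H × K)) • (y : H × K) = 0 :=
      (Finset.sum_coe_sort S (fun y => (f y - g y) • y)).trans h0
    have h2 := linearIndependent_iff'.mp hSind Finset.univ
      (fun y => f (y : H × K) - g (y : H × K)) h1 ⟨x, Finset.mem_coe.mpr hx⟩
      (Finset.mem_univ _)
    have h3 : f x - g x = 0 := h2
    omega
  -- ℤ-valued coefficients
  set C0 : H × K → ℤ := fun x => (c0f x : ℤ) with hC0_def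
  set Afun : Fin n → H × K → ℤ := fun i x => (cpf i x : ℤ) - (c0f x : ℤ) with hAfun_def
  have natsmul : ∀ (f : H × K → ℕ) (x : H × K), ((f x : ℤ)) • x = f x • x := fun f x =>
    natCast_zsmul _ _
  have hC0rel : ∑ x ∈ S, C0 x • x = (((h' : H), (0 : K)) : H × K) := by
    rw [hc0f]
    exact Finset.sum_congr rfl fun x _ => natsmul c0f x
  have hCprel : ∀ i, ∑ x ∈ S, ((cpf i x : ℤ)) • x = (((h' : H), k' i) : H × K) := by
    intro i
    rw [hcpf i]
    exact Finset.sum_congr rfl fun x _ => natsmul (cpf i) x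
  have hCmrel : ∀ i, ∑ x ∈ S, ((cmf i x : ℤ)) • x = (((h' : H), -(k' i)) : H × K) := by
    intro i
    rw [hcmf i]
    exact Finset.sum_congr rfl fun x _ => natsmul (cmf i) x
  have hpm : ∀ i, ∀ x ∈ S, (cpf i x : ℤ) + (cmf i x : ℤ) = 2 * (c0f x : ℤ) := by
    intro i x hx
    refine uniq (fun x => (cpf i x : ℤ) + (cmf i x : ℤ)) (fun x => 2 * (c0f x : ℤ)) ?_ x hx
    calc ∑ y ∈ S, ((cpf i y : ℤ) + (cmf i y : ℤ)) • y
        = ∑ y ∈ S, (((cpf i y : ℤ)) • y + ((cmf i y : ℤ)) • y) :=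
          Finset.sum_congr rfl fun y _ => add_smul _ _ _
      _ = ∑ y ∈ S, ((cpf i y : ℤ)) • y + ∑ y ∈ S, ((cmf i y : ℤ)) • y :=
          Finset.sum_add_distrib
      _ = (((h' : H), k' i) : H × K) + ((h' : H), -(k' i)) := by rw [hCprel i, hCmrel i]
      _ = (2 : ℤ) • (((h' : H), (0 : K)) : H × K) := by
          rw [Prod.mk_add_mk, Prod.smul_mk]
          congr 1
          · rw [two_smul]
          · simp
      _ = (2 : ℤ) • ∑ x ∈ S, C0 x • x := by rw [hC0rel]
      _ = ∑ y ∈ S, (2 * C0 y) • y := by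
          rw [Finset.smul_sum]
          exact Finset.sum_congr rfl fun y _ => (mul_smul _ _ _).symm
  have hArel : ∀ i, ∑ x ∈ S, Afun i x • x = (((0 : H), k' i) : H × K) := by
    intro i
    have : ∑ x ∈ S, Afun i x • x
        = ∑ x ∈ S, ((cpf i x : ℤ)) • x - ∑ x ∈ S, C0 x • x := by
      rw [← Finset.sum_sub_distrib]
      exact Finset.sum_congr rfl fun x _ => sub_smul _ _ _
    rw [this, hCprel i, hC0rel, Prod.mk_sub_mk]
    simp
  -- positivity of first coordinates on S
  have hxpos : ∀ x ∈ S, 0 < ((x.1 : ℚ)) := by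
    intro x hx
    rcases hScone (Finset.mem_coe.mpr hx) with h | h
    · exact h
    · exfalso
      exact hSind.ne_zero ⟨x, Finset.mem_coe.mpr hx⟩ (Set.mem_singleton_iff.mp h)
  -- counting lemma
  have hcount : ∀ T : Finset (H × K),
      (∑ x ∈ T, C0 x • x = (((h' : H), (0 : K)) : H × K)) →
      (∀ i, ∑ x ∈ T, Afun i x • x = (((0 : H), k' i) : H × K)) →
      n + 1 ≤ T.card := by
    intro T hT0 hTa
    set X : Fin (n+1) → ℚ × (Fin n → ℚ) :=
      Fin.cases (((h' : ℚ)), 0) (fun i => (0, Pi.single i 1)) with hX_def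
    have hX0 : X 0 = (((h' : ℚ)), 0) := rfl
    have hXs : ∀ i, X (Fin.succ i) = (0, Pi.single i 1) := fun i => rfl
    have hψ0 : ψ (((h' : H), (0 : K)) : H × K) = X 0 := by
      rw [ψapp, hX0, θ0]
    have hψs : ∀ i, ψ (((0 : H), k' i) : H × K) = X (Fin.succ i) := by
      intro i
      rw [ψapp, hXs i, θk' i]
      simp
    have hXmem : ∀ col, X col ∈ Submodule.span ℚ (ψ '' (T : Set (H × K))) := by
      have hmem : ∀ y : H × K, (∃ F : H × K → ℤ, ∑ x ∈ T, F x • x = y) →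
          ψ y ∈ Submodule.span ℚ (ψ '' (T : Set (H × K))) := by
        rintro y ⟨F, rfl⟩
        rw [map_sum]
        refine Submodule.sum_mem _ fun x hx => ?_
        rw [map_zsmul]
        refine Submodule.smul_of_tower_mem _ _ ?_
        exact Submodule.subset_span (Set.mem_image_of_mem _ (Finset.mem_coe.mpr hx))
      intro col
      induction col using Fin.cases with
      | zero =>
        rw [← hψ0]
        exact hmem _ ⟨C0, hT0⟩
      | succ i =>
        rw [← hψs i]
        exact hmem _ ⟨Afun i, hTa i⟩
    have hXind : LinearIndependent ℚ X := by
      rw [Fintype.linearIndependent_iff]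
      intro g hg
      have hg0 : g 0 = 0 := by
        have h4 := congrArg Prod.fst hg
        rw [Prod.fst_sum, Fin.sum_univ_succ] at h4
        simp only [Prod.smul_fst, hX0, hXs, Prod.fst_zero, smul_zero, smul_eq_mul,
          mul_zero, Finset.sum_const_zero, add_zero] at h4
        rcases mul_eq_zero.mp h4 with h | h
        · exact h
        · exact absurd h (ne_of_gt hh')
      have hgs : ∀ i, g (Fin.succ i) = 0 := by
        intro i
        have h4 := congrArg Prod.snd hg
        rw [Prod.snd_sum, Fin.sum_univ_succ] at h4
        simp only [Prod.smul_snd, hX0, hXs, Prod.snd_zero, smul_zero, zero_add] at h4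
        have h7 := congrFun h4 i
        simp only [Finset.sum_apply, Pi.smul_apply, Pi.single_apply, smul_eq_mul,
          Pi.zero_apply, mul_ite, mul_one, mul_zero] at h7
        rw [Finset.sum_ite_eq Finset.univ i (fun i' => g (Fin.succ i'))] at h7
        simpa using h7
      intro col
      induction col using Fin.cases with
      | zero => exact hg0
      | succ i => exact hgs i
    set W : Submodule ℚ (ℚ × (Fin n → ℚ)) := Submodule.span ℚ (ψ '' (T : Set (H × K)))
      with hW_def
    haveI : FiniteDimensional ℚ W := by
      rw [hW_def]
      exact FiniteDimensional.span_of_finite ℚ ((T.finite_toSet).image _)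
    set X' : Fin (n+1) → W := fun col => ⟨X col, hXmem col⟩ with hX'_def
    have hX'ind : LinearIndependent ℚ X' := by
      refine LinearIndependent.of_comp W.subtype ?_
      have : W.subtype ∘ X' = X := rfl
      rw [this]
      exact hXind
    have h8 : n + 1 ≤ Module.finrank ℚ W := by
      have := hX'ind.fintype_card_le_finrank
      rwa [Fintype.card_fin] at this
    have h9 : Module.finrank ℚ W ≤ T.card := by
      have himg : (ψ '' (T : Set (H × K))) = ((T.image ψ : Finset _) : Set (ℚ × (Fin n → ℚ))) := by
        rw [Finset.coe_image]
      rw [hW_def, himg]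
      calc Module.finrank ℚ (Submodule.span ℚ ((T.image ψ : Finset _) : Set (ℚ × (Fin n → ℚ))))
          ≤ (T.image ψ).card := finrank_span_finset_le_card _
        _ ≤ T.card := Finset.card_image_le
    omega
  have hcardS : S.card = n + 1 := le_antisymm hcard_le (hcount S hC0rel hArel)
  -- all c0f positive on S
  have hC0pos : ∀ x ∈ S, 1 ≤ C0 x := by
    intro x hx
    rcases Nat.eq_zero_or_pos (c0f x) with h0 | hpos
    · exfalso
      have hT0 : ∑ y ∈ S.erase x, C0 y • y = (((h' : H), (0 : K)) : H × K) := by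
        rw [Finset.sum_erase S (f := fun y => C0 y • y)
          (by show ((c0f x : ℤ)) • x = 0; rw [h0]; simp)]
        exact hC0rel
      have hTa : ∀ i, ∑ y ∈ S.erase x, Afun i y • y = (((0 : H), k' i) : H × K) := by
        intro i
        have hcp0 : cpf i x = 0 := by
          have := hpm i x hx
          omega
        rw [Finset.sum_erase S (f := fun y => Afun i y • y)
          (by show (((cpf i x : ℤ)) - ((c0f x : ℤ))) • x = 0; rw [h0, hcp0]; simp)]
        exact hArel i
      have := hcount (S.erase x) hT0 hTa
      rw [Finset.card_erase_of_mem hx, hcardS] at this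
      omega
    · show (1:ℤ) ≤ ((c0f x : ℤ))
      exact_mod_cast hpos
  -- ### index S by Fin (n+1)
  have hcard' : Fintype.card (↥S) = n + 1 := by rw [Fintype.card_coe, hcardS]
  set e : ↥S ≃ Fin (n + 1) := Fintype.equivFinOfCardEq hcard' with he_def
  set sfun : Fin (n + 1) → H × K := fun j => ((e.symm j : ↥S) : H × K) with hsfun_def
  have hsfun_mem : ∀ j, sfun j ∈ S := fun j => (e.symm j).2
  have reindex : ∀ f : H × K → H × K, ∑ x ∈ S, f x = ∑ j, f (sfun j) := by
    intro f
    rw [← Finset.sum_coe_sort S f]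
    exact (Equiv.sum_comp e.symm (fun y : ↥S => f (y : H × K))).symm
  -- ### β and m
  have hcoeH : ∀ (f : Fin (n+1) → H), ((∑ j, f j : H) : ℚ) = ∑ j, ((f j : ℚ)) := fun f =>
    map_sum H.subtype f Finset.univ
  set hj : Fin (n + 1) → ℚ := fun j => ((sfun j).1 : ℚ) with hhj_def
  have hjpos : ∀ j, 0 < hj j := fun j => hxpos _ (hsfun_mem j)
  set D : ℕ := ∏ j, (hj j).den with hD_def
  have hDpos : 0 < D := Finset.prod_pos fun j _ => (hj j).pos
  have hdenDvd : ∀ j, (hj j).den ∣ D := fun j => Finset.dvd_prod_of_mem _ (Finset.mem_univ j)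
  set u : Fin (n + 1) → ℤ := fun j => (hj j).num * ((D / (hj j).den : ℕ) : ℤ) with hu_def
  have hu_val : ∀ j, ((u j : ℚ)) = hj j * D := by
    intro j
    obtain ⟨t, ht⟩ := hdenDvd j
    have hden0 : ((hj j).den : ℚ) ≠ 0 := Nat.cast_ne_zero.mpr (hj j).den_nz
    have hDdiv : (D / (hj j).den : ℕ) = t := by
      rw [ht]
      exact Nat.mul_div_cancel_left t (hj j).pos
    have hq : ((hj j).num : ℚ) = hj j * ((hj j).den : ℚ) :=
      ((eq_div_iff hden0).mp (Rat.num_div_den (hj j)).symm).symm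
    have huc : ((u j : ℚ)) = ((hj j).num : ℚ) * (((D / (hj j).den : ℕ) : ℤ) : ℚ) :=
      Int.cast_mul _ _
    rw [huc, hDdiv, hq, ht]
    push_cast
    ring
  have hupos : ∀ j, 0 < u j := by
    intro j
    have h1 : 0 < (hj j).num := Rat.num_pos.mpr (hjpos j)
    have h2 : 0 < (D / (hj j).den : ℕ) := Nat.div_pos (Nat.le_of_dvd hDpos (hdenDvd j)) (hj j).pos
    positivity
  set g : ℤ := Finset.univ.gcd u with hg_def
  have hgnonneg : 0 ≤ g := by
    have hn := Finset.normalize_gcd (s := (Finset.univ : Finset (Fin (n+1)))) (f := u)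
    rw [← Int.abs_eq_normalize, ← hg_def] at hn
    rw [← hn]
    exact abs_nonneg g
  have hgne : g ≠ 0 := by
    intro h0
    have := (Finset.gcd_eq_zero_iff).mp (hg_def ▸ h0) 0 (Finset.mem_univ _)
    have := hupos 0
    omega
  have hgpos : 0 < g := lt_of_le_of_ne hgnonneg (Ne.symm hgne)
  have hgdvd : ∀ j, g ∣ u j := fun j => Finset.gcd_dvd (Finset.mem_univ j)
  set m : Fin (n + 1) → ℤ := fun j => u j / g with hm_def
  have hum : ∀ j, u j = g * m j := fun j => (Int.mul_ediv_cancel' (hgdvd j)).symm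
  have hmpos : ∀ j, 1 ≤ m j := by
    intro j
    have h1 := hupos j
    rw [hum j] at h1
    nlinarith [hgpos]
  have hgcdm : Finset.univ.gcd m = 1 := by
    have h1 : Finset.univ.gcd (fun j => g * m j) = normalize g * Finset.univ.gcd m :=
      Finset.gcd_mul_left
    have h2 : (fun j => g * m j) = u := by
      funext j
      rw [← hum j]
    rw [h2, ← hg_def, Int.normalize_of_nonneg hgnonneg] at h1
    have := mul_left_cancel₀ hgne (by rw [← h1, mul_one] : g * 1 = g * Finset.univ.gcd m)
    omega
  obtain ⟨t, ht⟩ := bezout_finset Finset.univ u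
  set βH : H := ∑ j, t j • (sfun j).1 with hβH_def
  have hβval : ((βH : ℚ)) = (g : ℚ) / D := by
    rw [hβH_def, hcoeH (fun j => t j • (sfun j).1)]
    have hst : ∀ j : Fin (n+1), ((t j • (sfun j).1 : H) : ℚ) = (t j : ℚ) * hj j := by
      intro j
      have : ((t j • (sfun j).1 : H) : ℚ) = (t j : ℤ) • (((sfun j).1 : ℚ)) := rfl
      rw [this, zsmul_eq_mul]
    rw [Finset.sum_congr rfl fun j _ => hst j]
    have hDq : ((D : ℚ)) ≠ 0 := Nat.cast_ne_zero.mpr hDpos.ne'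
    have hterm : ∀ j : Fin (n+1), (t j : ℚ) * hj j = (t j : ℚ) * u j / D := by
      intro j
      have h1 : hj j = (u j : ℚ) / D := by rw [hu_val j]; field_simp
      rw [h1]
      ring
    rw [Finset.sum_congr rfl fun j _ => hterm j, ← Finset.sum_div]
    congr 1
    exact_mod_cast congrArg (Int.cast : ℤ → ℚ) ht.symm
  have hβpos : 0 < ((βH : ℚ)) := by
    rw [hβval]
    positivity
  have hsmj : ∀ j, ((sfun j).1 : ℚ) = m j * ((βH : ℚ)) := by
    intro j
    have hDq : ((D : ℚ)) ≠ 0 := Nat.cast_ne_zero.mpr hDpos.ne'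
    show hj j = (m j : ℚ) * ((βH : ℚ))
    rw [hβval]
    have h1 : hj j = (u j : ℚ) / D := by
      rw [hu_val j]
      field_simp
    rw [h1, hum j]
    push_cast
    field_simp
  -- ### the a matrix and relations
  have harel : ∀ i, ∑ j, Afun i (sfun j) • sfun j = (((0 : H), k' i) : H × K) := fun i =>
    ((reindex (fun x => Afun i x • x)).symm.trans (hArel i))
  have hma : ∀ i, ∑ j, m j * Afun i (sfun j) = 0 := by
    intro i
    have h1 : (∑ j, Afun i (sfun j) • sfun j).1 = (0 : H) := by rw [harel i]
    have h2 : ∑ j, Afun i (sfun j) • (sfun j).1 = (0 : H) := by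
      rw [← h1, Prod.fst_sum]
      exact Finset.sum_congr rfl fun j _ => (Prod.smul_fst _ _).symm
    have h3 : ∑ j, ((Afun i (sfun j) • (sfun j).1 : H) : ℚ) = 0 := by
      rw [← hcoeH (fun j => Afun i (sfun j) • (sfun j).1), h2]
      rfl
    have h4 : ∑ j, (Afun i (sfun j) : ℚ) * ((m j : ℚ) * ((βH : ℚ))) = 0 := by
      rw [← h3]
      refine Finset.sum_congr rfl fun j _ => ?_
      have h3' : ((Afun i (sfun j) • (sfun j).1 : H) : ℚ)
          = (Afun i (sfun j) : ℤ) • (((sfun j).1 : ℚ)) := rfl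
      rw [h3', zsmul_eq_mul, hsmj j]
    have h5 : (∑ j, (Afun i (sfun j) : ℚ) * (m j : ℚ)) * ((βH : ℚ)) = 0 := by
      rw [Finset.sum_mul, ← h4]
      exact Finset.sum_congr rfl fun j _ => by ring
    have h6 : ∑ j, (Afun i (sfun j) : ℚ) * (m j : ℚ) = 0 :=
      (mul_eq_zero.mp h5).resolve_right (ne_of_gt hβpos)
    have h7 : ((∑ j, m j * Afun i (sfun j) : ℤ) : ℚ) = 0 := by
      push_cast
      rw [← h6]
      exact Finset.sum_congr rfl fun j _ => by ring
    exact_mod_cast h7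
  -- ### conclude with the core lemma
  have hc0rel : ∑ j, C0 (sfun j) • sfun j = (((h' : H), (0 : K)) : H × K) :=
    ((reindex (fun x => C0 x • x)).symm.trans hC0rel)
  exact core_lemma H hn k' sfun (fun i j => Afun i (sfun j)) m hmpos hgcdm βH hsmj hma harel
    (∑ j, C0 (sfun j) * m j).toNat (fun j => C0 (sfun j))
    (fun j => hC0pos _ (hsfun_mem j)) h' hdiv hc0rel rfl

end Main

open TensorProduct

/-- Handelman's intrinsic characterization of ultrasimpliciality, used as the
definition. -/
def IsUltrasimplicial {G : Type*} [AddCommGroup G] (pos : Set G) : Prop :=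
  ∀ F : Finset G, ↑F ⊆ pos →
    ∃ S : Finset G, ↑S ⊆ pos ∧
      LinearIndependent ℤ (fun s : (S : Set G) => (s : G)) ∧
      ∀ f ∈ F, ∃ c : G → ℕ, f = ∑ s ∈ S, c s • s

/-- Necessary condition: if there is a maximal independent family `k'` in `K`
and a positive `h' ∈ H` such that for every prime `p` and integers `c i` with
`p ∤ gcd c`, divisibility of `∑ c i • k' i` by `p` in `K` forces `h'` not to be
divisible by `p` in `H`, then `G = H ⊕ K` is not ultrasimplicial; more
precisely, no finite `ℤ`-linearly independent subset of the positive cone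
generates the `2n+1` elements `(h',0), (h', ±k'ᵢ)` with nonnegative integer
coefficients. -/
theorem statement1
    (H : AddSubgroup ℚ) (hH : H ≠ ⊥)
    (K : Type*) [AddCommGroup K] [NoZeroSMulDivisors ℤ K] [Nontrivial K]
    [Module.Finite ℚ (ℚ ⊗[ℤ] K)]
    (n : ℕ) (k' : Fin n → K)
    (hind : LinearIndependent ℤ k')
    (hmax : ∀ k : K, ∃ c : ℤ, c ≠ 0 ∧ c • k ∈ Submodule.span ℤ (Set.range k'))
    (h' : H) (hh' : 0 < (h' : ℚ))
    (hdiv : ∀ q : ℕ, q.Prime → ∀ c : Fin n → ℤ, ¬ ((q : ℤ) ∣ Finset.univ.gcd c) →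
      (∃ b : K, ∑ i, c i • k' i = (q : ℤ) • b) → ¬ ∃ b : H, h' = q • b) :
    ¬ IsUltrasimplicial ({g : H × K | 0 < (g.1 : ℚ)} ∪ {0}) ∧
    ¬ ∃ S : Finset (H × K),
        ↑S ⊆ ({g : H × K | 0 < (g.1 : ℚ)} ∪ {0} : Set (H × K)) ∧
        LinearIndependent ℤ (fun s : (S : Set (H × K)) => (s : H × K)) ∧
        ∀ f ∈ ({((h' : H), (0 : K))} ∪ (Set.range fun i : Fin n => ((h' : H), k' i)) ∪
            (Set.range fun i : Fin n => ((h' : H), -(k' i))) : Set (H × K)),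
          ∃ c : H × K → ℕ, f = ∑ s ∈ S, c s • s := by
  classical
  have hn : 1 ≤ n := by
    by_contra hlt
    push_neg at hlt
    have hn0 : n = 0 := by omega
    subst hn0
    obtain ⟨k, hk⟩ := exists_ne (0 : K)
    obtain ⟨c, hc, hmem⟩ := hmax k
    rw [show Set.range k' = (∅ : Set K) from Set.range_eq_empty k', Submodule.span_empty,
      Submodule.mem_bot] at hmem
    exact hk ((smul_eq_zero.mp hmem).resolve_left hc)
  have main := statement1_aux H n k' hind hmax hn h' hh' hdiv
  refine ⟨?_, main⟩
  intro hUS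
  set F : Finset (H × K) := insert ((h' : H), (0:K))
    ((Finset.image (fun i : Fin n => ((h' : H), k' i)) Finset.univ) ∪
     (Finset.image (fun i : Fin n => ((h' : H), -(k' i))) Finset.univ)) with hF_def
  have hFcone : ↑F ⊆ ({g : H × K | 0 < (g.1 : ℚ)} ∪ {0} : Set (H × K)) := by
    intro x hx
    left
    have hx1 : x.1 = h' := by
      rw [hF_def] at hx
      simp only [Finset.coe_insert, Set.mem_insert_iff, Finset.coe_union, Set.mem_union,
        Finset.coe_image, Set.mem_image, Finset.mem_coe, Finset.mem_image,
        Finset.mem_univ, true_and] at hx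
      rcases hx with rfl | ⟨i, rfl⟩ | ⟨i, rfl⟩ <;> rfl
    show 0 < ((x.1 : ℚ))
    rw [hx1]
    exact hh'
  obtain ⟨S, hS1, hS2, hS3⟩ := hUS F hFcone
  refine main ⟨S, hS1, hS2, fun f hf => hS3 f ?_⟩
  rcases hf with (hf | hf) | hf
  · rw [Set.mem_singleton_iff] at hf
    rw [hf, hF_def]
    exact Finset.mem_insert_self _ _
  · obtain ⟨i, rfl⟩ := hf
    rw [hF_def]
    exact Finset.mem_insert_of_mem
      (Finset.mem_union_left _ (Finset.mem_image_of_mem _ (Finset.mem_univ i)))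
  · obtain ⟨i, rfl⟩ := hf
    rw [hF_def]
    exact Finset.mem_insert_of_mem
      (Finset.mem_union_right _ (Finset.mem_image_of_mem _ (Finset.mem_univ i)))
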